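/- Consider the 4×4 linear system h11 W_f + h12 W_p − R a² h13 Θ + C a² h13 Γ = 0, h21 W_f + h22 W_p − R a² h23 Θ + C a² h23 Γ = 0, R W_f + R W_p − (Λ + σ) Θ = 0, C W_f + C W_p − (Λ + ε₁Le σ) Γ = 0, with unknowns (W_f, W_p, Θ, Γ). If this system admits a nontrivial solution, and h13 h22 − h12 h23 + h11 h23 − h21 h13 ≠ 0, a² ≠ 0, then R² = ((Λ + σ)/a²)·(h11 h22 − h12 h21)/(h13 h22 − h12 h23 + h11 h23 − h21 h13) + C²·(Λ + σ)/(Λ + ε₁Le σ) (assuming Λ + ε₁Le σ ≠ 0). -/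

import Mathlib

/-- Dispersion relation (25): a nontrivial solution of the normal-mode system forces
`R² = ((Λ+σ)/a²)·(h11h22 − h12h21)/S + C²(Λ+σ)/(Λ+ε₁Le σ)`,
where `S = h13h22 − h12h23 + h11h23 − h21h13`. -/
theorem dispersion_relation
    (h11 h12 h13 h21 h22 h23 Λ a2 L σ R C : ℝ)
    (hS : h13 * h22 - h12 * h23 + h11 * h23 - h21 * h13 ≠ 0)
    (ha : a2 ≠ 0) (hden : Λ + L * σ ≠ 0)
    (Wf Wp Θ Γ : ℝ)
    (hnontriv : ¬ (Wf = 0 ∧ Wp = 0 ∧ Θ = 0 ∧ Γ = 0))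
    (e1 : h11 * Wf + h12 * Wp - R * a2 * h13 * Θ + C * a2 * h13 * Γ = 0)
    (e2 : h21 * Wf + h22 * Wp - R * a2 * h23 * Θ + C * a2 * h23 * Γ = 0)
    (e3 : R * Wf + R * Wp - (Λ + σ) * Θ = 0)
    (e4 : C * Wf + C * Wp - (Λ + L * σ) * Γ = 0) :
    R ^ 2 = ((Λ + σ) / a2) * (h11 * h22 - h12 * h21)
        / (h13 * h22 - h12 * h23 + h11 * h23 - h21 * h13)
      + C ^ 2 * (Λ + σ) / (Λ + L * σ) := by
  by_cases hsum : Wf + Wp = 0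
  · -- degenerate case: Wf + Wp = 0
    have hΓ0 : (Λ + L * σ) * Γ = 0 := by linear_combination C * hsum - e4
    have hΓ : Γ = 0 := by
      rcases mul_eq_zero.mp hΓ0 with h | h
      · exact absurd h hden
      · exact h
    have hΘ0 : (Λ + σ) * Θ = 0 := by linear_combination R * hsum - e3
    have hSWf : (h13 * h22 - h12 * h23 + h11 * h23 - h21 * h13) * Wf = 0 := by
      linear_combination h23 * e1 - h13 * e2 + (h13 * h22 - h12 * h23) * hsum
    have hWf : Wf = 0 := by
      rcases mul_eq_zero.mp hSWf with h | h
      · exact absurd h hS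
      · exact h
    have hWp : Wp = 0 := by linarith
    have hΘ : Θ ≠ 0 := by
      intro h
      exact hnontriv ⟨hWf, hWp, h, hΓ⟩
    have hΛσ : Λ + σ = 0 := by
      rcases mul_eq_zero.mp hΘ0 with h | h
      · exact h
      · exact absurd h hΘ
    -- show R = 0
    have h13' : R * a2 * h13 * Θ = 0 := by
      linear_combination h11 * hWf + h12 * hWp + C * a2 * h13 * hΓ - e1
    have h23' : R * a2 * h23 * Θ = 0 := by
      linear_combination h21 * hWf + h22 * hWp + C * a2 * h23 * hΓ - e2
    have hR : R = 0 := by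
      by_contra hRne
      have h13z : h13 = 0 := by
        rcases mul_eq_zero.mp h13' with h | h
        · rcases mul_eq_zero.mp h with h' | h'
          · rcases mul_eq_zero.mp h' with h'' | h''
            · exact absurd h'' hRne
            · exact absurd h'' ha
          · exact h'
        · exact absurd h hΘ
      have h23z : h23 = 0 := by
        rcases mul_eq_zero.mp h23' with h | h
        · rcases mul_eq_zero.mp h with h' | h'
          · rcases mul_eq_zero.mp h' with h'' | h''
            · exact absurd h'' hRne
            · exact absurd h'' ha
          · exact h'
        · exact absurd h hΘ
      apply hS
      rw [h13z, h23z]; ring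
    rw [hR, hΛσ]
    simp
  · -- main case: Wf + Wp ≠ 0
    have hP : ((Λ + σ) * (Λ + L * σ) * (h11 * h22 - h12 * h21)
        - a2 * (R ^ 2 * (Λ + L * σ) - C ^ 2 * (Λ + σ))
          * (h13 * h22 - h12 * h23 + h11 * h23 - h21 * h13)) * (Wf + Wp) = 0 := by
      linear_combination ((h22 - h21) * (Λ + σ) * (Λ + L * σ)) * e1
        + ((h11 - h12) * (Λ + σ) * (Λ + L * σ)) * e2
        - (R * a2 * (Λ + L * σ) * ((h22 - h21) * h13 + (h11 - h12) * h23)) * e3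
        + (C * a2 * (Λ + σ) * ((h22 - h21) * h13 + (h11 - h12) * h23)) * e4
    have key : (Λ + σ) * (Λ + L * σ) * (h11 * h22 - h12 * h21)
        = a2 * (R ^ 2 * (Λ + L * σ) - C ^ 2 * (Λ + σ))
          * (h13 * h22 - h12 * h23 + h11 * h23 - h21 * h13) := by
      rcases mul_eq_zero.mp hP with h | h
      · linarith
      · exact absurd h hsum
    rw [div_mul_eq_mul_div, div_div, div_add_div _ _ (mul_ne_zero ha hS) hden,
      eq_div_iff (mul_ne_zero (mul_ne_zero ha hS) hden)]
    linear_combination -key
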